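/- Let G₁, G₂, G₃ ∈ ℂ³ be linearly independent vectors. Then the 3×6 complex matrix whose columns are G₁×e₁, G₁×e₂, G₂×e₁, G₂×e₂, G₃×e₁, G₃×e₂ (where e₁, e₂ are the first two standard basis vectors of ℂ³ and × is the cross product extended bilinearly to ℂ³) has rank three. -/

import Mathlib

theorem stmt0 (G : Fin 3 → Fin 3 → ℂ) (hG : LinearIndependent ℂ G) :
    (Matrix.of fun (i : Fin 3) (p : Fin 3 × Fin 2) =>
      crossProduct (G p.1) (Pi.single (Fin.castLE (by norm_num) p.2) 1) i).rank = 3 := by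
  set A : Matrix (Fin 3) (Fin 3 × Fin 2) ℂ := Matrix.of fun (i : Fin 3) (p : Fin 3 × Fin 2) =>
      crossProduct (G p.1) (Pi.single (Fin.castLE (by norm_num) p.2) 1) i with hA
  have hspan : Submodule.span ℂ (Set.range G) = ⊤ :=
    hG.span_eq_top_of_card_eq_finrank (by simp)
  have h3 : (Pi.single 2 1 : Fin 3 → ℂ) ∈ Submodule.span ℂ (Set.range G) := by
    rw [hspan]; trivial
  have h1 : (Pi.single 0 1 : Fin 3 → ℂ) ∈ Submodule.span ℂ (Set.range G) := by
    rw [hspan]; trivial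
  rw [Submodule.mem_span_range_iff_exists_fun] at h3 h1
  obtain ⟨a, ha⟩ := h3
  obtain ⟨b, hb⟩ := h1
  have col : ∀ (c : Fin 3 → ℂ) (j : Fin 3), (∑ i, c i • G i = Pi.single j 1) →
      ∀ (m : Fin 3) (i : Fin 3),
      ∑ q : Fin 3, c q * crossProduct (G q) (Pi.single m 1) i
        = crossProduct (Pi.single j 1) (Pi.single m 1) i := by
    intro c j hc m i
    have : crossProduct (∑ q, c q • G q) (Pi.single m 1) i
        = ∑ q, c q * crossProduct (G q) (Pi.single m 1) i := by
      rw [map_sum]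
      simp [Finset.sum_apply]
    rw [← this, hc]
  have X1 : ∀ i, crossProduct (Pi.single (2:Fin 3) (1:ℂ)) (Pi.single (0:Fin 3) 1) i
      = (Pi.single 1 1 : Fin 3 → ℂ) i := by
    intro i; fin_cases i <;> simp [crossProduct, Pi.single_apply]
  have X2 : ∀ i, crossProduct (Pi.single (2:Fin 3) (1:ℂ)) (Pi.single (1:Fin 3) 1) i
      = -(Pi.single 0 1 : Fin 3 → ℂ) i := by
    intro i; fin_cases i <;> simp [crossProduct, Pi.single_apply]
  have X3 : ∀ i, crossProduct (Pi.single (0:Fin 3) (1:ℂ)) (Pi.single (1:Fin 3) 1) i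
      = (Pi.single 2 1 : Fin 3 → ℂ) i := by
    intro i; fin_cases i <;> simp [crossProduct, Pi.single_apply]
  set B : Matrix (Fin 3 × Fin 2) (Fin 3) ℂ := Matrix.of fun p k =>
    if k = 0 then (if p.2 = 0 then a p.1 else 0)
    else if k = 1 then (if p.2 = 1 then a p.1 else 0)
    else (if p.2 = 1 then b p.1 else 0) with hB
  set C : Matrix (Fin 3) (Fin 3) ℂ := Matrix.of fun (i k : Fin 3) =>
      if k = 0 then (Pi.single 1 1 : Fin 3 → ℂ) i else if k = 1 then -(Pi.single 0 1 : Fin 3 → ℂ) i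
        else (Pi.single 2 1 : Fin 3 → ℂ) i with hCdef
  have E1 : (Pi.single (Fin.castLE (show (2:ℕ) ≤ 3 by norm_num) (1 : Fin 2)) 1 : Fin 3 → ℂ)
      = Pi.single 1 1 := rfl
  have key : A * B = C := by
    ext i k
    rw [Matrix.mul_apply, Fintype.sum_prod_type]
    fin_cases k
    · simp only [hA, hB, hCdef, Matrix.of_apply, Fin.sum_univ_succ, Fin.sum_univ_zero]
      norm_num
      rw [← X1 i, ← col a 2 ha 0 i, Fin.sum_univ_three]
      ring
    · simp only [hA, hB, hCdef, Matrix.of_apply, Fin.sum_univ_succ, Fin.sum_univ_zero]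
      norm_num
      rw [E1, ← X2 i, ← col a 2 ha 1 i, Fin.sum_univ_three]
      ring
    · simp only [hA, hB, hCdef, Matrix.of_apply, Fin.sum_univ_succ, Fin.sum_univ_zero]
      norm_num
      rw [E1, ← X3 i, ← col b 0 hb 1 i, Fin.sum_univ_three]
      ring
  have hC : C.rank = 3 := by
    rw [Matrix.rank_of_isUnit]
    · simp
    · rw [Matrix.isUnit_iff_isUnit_det, Matrix.det_fin_three]
      simp [hCdef, Pi.single_apply]
  have hle : A.rank ≤ 3 := by simpa using A.rank_le_card_height
  have hge : 3 ≤ A.rank := by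
    have h := Matrix.rank_mul_le_left A B
    rw [key, hC] at h
    exact h
  omega
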